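/- Let θ₂ : π → W be a 2-truncated expansion and let φ, ψ ∈ Aut(π) both satisfy the invariance condition (|φ| ⊗ |φ|)(I₂) ⊆ I₂, (|ψ| ⊗ |ψ|)(I₂) ⊆ I₂, and assume moreover (|φ⁻¹| ⊗ |φ⁻¹|)(I₂) ⊆ I₂. Then τ₁^θ(φ ∘ ψ) = τ₁^θ(φ) + |φ|_W ∘ τ₁^θ(ψ) ∘ |φ|⁻¹ as linear maps H → W. That is, τ₁^θ is a 1-cocycle (crossed homomorphism) on the group of I₂-preserving automorphisms of π with coefficients in Hom_ℝ(H, W), where φ acts on f ∈ Hom_ℝ(H, W) by f ↦ |φ|_W ∘ f ∘ |φ|⁻¹. (First assertion of the paper's Proposition 2.4, in truncated form.) -/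

import Mathlib

open scoped TensorProduct

/-- `H := ℝ ⊗_ℤ π^ab`. -/
abbrev HH (π : Type*) [Group π] := TensorProduct ℤ ℝ (Additive (Abelianization π))

/-- `[g] := 1 ⊗ (class of g) ∈ H`. -/
noncomputable def cl {π : Type*} [Group π] (g : π) : HH π :=
  (1 : ℝ) ⊗ₜ[ℤ] (Additive.ofMul (Abelianization.of g))

/-- `|φ| : H → H`, the `ℝ`-linear map induced by `φ ∈ Aut(π)`. -/
noncomputable def indH {π : Type*} [Group π] (φ : MulAut π) : HH π →ₗ[ℝ] HH π :=
  LinearMap.baseChange ℝ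
    ((MonoidHom.toAdditive (Abelianization.map φ.toMonoidHom)).toIntLinearMap)

/-- `|φ|_W : W → W`, the map induced by `|φ| ⊗ |φ|` on `W = (H ⊗_ℝ H) ⧸ I₂`, given that
`(|φ| ⊗ |φ|)(I₂) ⊆ I₂`. -/
noncomputable def indW {π : Type*} [Group π] (I₂ : Submodule ℝ (HH π ⊗[ℝ] HH π))
    (φ : MulAut π)
    (hφ : Submodule.map (TensorProduct.map (indH φ) (indH φ)) I₂ ≤ I₂) :
    ((HH π ⊗[ℝ] HH π) ⧸ I₂) →ₗ[ℝ] ((HH π ⊗[ℝ] HH π) ⧸ I₂) :=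
  Submodule.mapQ I₂ I₂ (TensorProduct.map (indH φ) (indH φ))
    (Submodule.map_le_iff_le_comap.mp hφ)

/-- `τ₁^θ` is a 1-cocycle (crossed homomorphism): for `I₂`-preserving
automorphisms `φ, ψ` (with `φ⁻¹` also preserving `I₂`, so `|φ|⁻¹ = |φ⁻¹|`),
`τ₁^θ(φ ∘ ψ) = τ₁^θ(φ) + |φ|_W ∘ τ₁^θ(ψ) ∘ |φ|⁻¹` as linear maps `H → W`.
(Here `φ * ψ` is the composite automorphism `φ ∘ ψ`; the hypothesis `hφψ` that it preserves
`I₂` is automatic from `hφ` and `hψ`.  Each `τ₁^θ(χ)` is specified by its defining property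
`τ₁^θ(χ) [g] = θ₂ g − |χ|_W (θ₂ (χ⁻¹ g))`, which determines it uniquely.) -/
lemma hh_rep {π : Type*} [Group π] (a : Additive (Abelianization π)) :
    ∃ g : π, a = Additive.ofMul (Abelianization.of g) := by
  obtain ⟨g, hg⟩ := Quot.exists_rep (Additive.toMul a)
  exact ⟨g, Additive.toMul.injective hg.symm⟩

lemma indH_tmul {π : Type*} [Group π] (φ : MulAut π) (r : ℝ) (g : π) :
    indH φ (r ⊗ₜ[ℤ] Additive.ofMul (Abelianization.of g))
      = r ⊗ₜ[ℤ] Additive.ofMul (Abelianization.of (φ g)) := by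
  simp [indH]

lemma indH_cl {π : Type*} [Group π] (φ : MulAut π) (g : π) :
    indH φ (cl g) = cl (φ g) := indH_tmul φ 1 g

lemma indH_mul_apply {π : Type*} [Group π] (φ ψ : MulAut π) (x : HH π) :
    indH (φ * ψ) x = indH φ (indH ψ x) := by
  induction x using TensorProduct.induction_on with
  | zero => simp
  | add x y hx hy => simp [map_add, hx, hy]
  | tmul r a =>
      obtain ⟨g, rfl⟩ := hh_rep a
      rw [indH_tmul, indH_tmul, indH_tmul, MulAut.mul_apply]

lemma indW_mkQ {π : Type*} [Group π] (I₂ : Submodule ℝ (HH π ⊗[ℝ] HH π))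
    (φ : MulAut π)
    (hφ : Submodule.map (TensorProduct.map (indH φ) (indH φ)) I₂ ≤ I₂)
    (t : HH π ⊗[ℝ] HH π) :
    indW I₂ φ hφ (I₂.mkQ t) = I₂.mkQ (TensorProduct.map (indH φ) (indH φ) t) :=
  by simp [indW]

lemma indW_mul_apply {π : Type*} [Group π] (I₂ : Submodule ℝ (HH π ⊗[ℝ] HH π))
    (φ ψ : MulAut π)
    (hφ : Submodule.map (TensorProduct.map (indH φ) (indH φ)) I₂ ≤ I₂)
    (hψ : Submodule.map (TensorProduct.map (indH ψ) (indH ψ)) I₂ ≤ I₂)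
    (hφψ : Submodule.map (TensorProduct.map (indH (φ * ψ)) (indH (φ * ψ))) I₂ ≤ I₂)
    (w : (HH π ⊗[ℝ] HH π) ⧸ I₂) :
    indW I₂ (φ * ψ) hφψ w = indW I₂ φ hφ (indW I₂ ψ hψ w) := by
  obtain ⟨t, rfl⟩ := I₂.mkQ_surjective w
  rw [indW_mkQ, indW_mkQ, indW_mkQ]
  congr 1
  induction t using TensorProduct.induction_on with
  | zero => simp
  | add x y hx hy => simp [map_add, hx, hy]
  | tmul x y => simp [indH_mul_apply]

theorem statement9 {π : Type*} [Group π] (I₂ : Submodule ℝ (HH π ⊗[ℝ] HH π))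
    (θ₂ : π → (HH π ⊗[ℝ] HH π) ⧸ I₂)
    (hθ : ∀ g h : π, θ₂ (g * h) = θ₂ g + θ₂ h + I₂.mkQ (cl g ⊗ₜ[ℝ] cl h))
    (φ ψ : MulAut π)
    (hφ : Submodule.map (TensorProduct.map (indH φ) (indH φ)) I₂ ≤ I₂)
    (hψ : Submodule.map (TensorProduct.map (indH ψ) (indH ψ)) I₂ ≤ I₂)
    (hφinv : Submodule.map (TensorProduct.map (indH φ⁻¹) (indH φ⁻¹)) I₂ ≤ I₂)
    (hφψ : Submodule.map (TensorProduct.map (indH (φ * ψ)) (indH (φ * ψ))) I₂ ≤ I₂)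
    (τφ τψ τφψ : HH π →ₗ[ℝ] ((HH π ⊗[ℝ] HH π) ⧸ I₂))
    (hτφ : ∀ g : π, τφ (cl g) = θ₂ g - indW I₂ φ hφ (θ₂ (φ⁻¹ g)))
    (hτψ : ∀ g : π, τψ (cl g) = θ₂ g - indW I₂ ψ hψ (θ₂ (ψ⁻¹ g)))
    (hτφψ : ∀ g : π, τφψ (cl g) = θ₂ g - indW I₂ (φ * ψ) hφψ (θ₂ ((φ * ψ)⁻¹ g))) :
    τφψ = τφ + (indW I₂ φ hφ).comp (τψ.comp (indH φ⁻¹)) := by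
  have key : ∀ g : π, τφψ (cl g)
      = τφ (cl g) + indW I₂ φ hφ (τψ (indH φ⁻¹ (cl g))) := by
    intro g
    rw [indH_cl, hτφψ g, hτφ g, hτψ (φ⁻¹ g)]
    have hinv : (φ * ψ)⁻¹ g = ψ⁻¹ (φ⁻¹ g) := by
      simp [mul_inv_rev, MulAut.mul_apply]
    rw [hinv, indW_mul_apply I₂ φ ψ hφ hψ hφψ, map_sub]
    abel
  refine LinearMap.ext fun x => ?_
  induction x using TensorProduct.induction_on with
  | zero => simp
  | add x y hx hy => simp only [map_add, LinearMap.add_apply] at hx hy ⊢; rw [hx, hy]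
  | tmul r a =>
      obtain ⟨g, rfl⟩ := hh_rep a
      have hx : (r ⊗ₜ[ℤ] Additive.ofMul (Abelianization.of g) : HH π) = r • cl g := by
        rw [cl, TensorProduct.smul_tmul', smul_eq_mul, mul_one]
      rw [hx, map_smul, map_smul, key g]
      simp
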